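/- With x* a recurrent state, the risk-sensitive relative value function satisfies h(x) = E_x[exp(∑_{i=0}^{τ_{x*}−1} (α C(Φ_i) − Λ(α)))] for every x ∈ X, where h is the right Perron eigenvector of diag(e^{αC})P normalized so that h(x*) = 1. -/

import Mathlib

open Matrix Filter Topology

/-- A (row-)stochastic matrix on a finite state space. -/
def StochasticMat {X : Type*} [Fintype X] (P : Matrix X X ℝ) : Prop :=
  (∀ x y, 0 ≤ P x y) ∧ ∀ x, ∑ y, P x y = 1

/-- A primitive nonnegative matrix: some power has all entries strictly positive.
For finite stochastic matrices this is equivalent to irreducibility together with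
aperiodicity. -/
def PrimitiveMat {X : Type*} [Fintype X] [DecidableEq X] (P : Matrix X X ℝ) : Prop :=
  ∃ n : ℕ, 0 < n ∧ ∀ x y, 0 < (P ^ n) x y

/-- `retE P xs x F = E_x[ F τ (Φ_0, …, Φ_τ) ]` where `τ = inf {i ≥ 1 : Φ_i = xs}` is the
first return/hitting time of `xs`, written as a sum over the return time `τ = k+1` and the
intermediate states `(Φ_1, …, Φ_k)` (all ≠ `xs`); the path fed to `F` is
`(x, Φ_1, …, Φ_k, xs) : Fin (k+2) → X`.  In particular, taking
`F k p = exp (∑_{i=0}^{k} f (p i))` gives `E_x[exp (∑_{i=0}^{τ-1} f(Φ_i))]`, and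
`F k p = (k+1)` gives `E_x[τ]`. -/
noncomputable def retE {X : Type*} [Fintype X] [DecidableEq X] (P : Matrix X X ℝ)
    (xs x : X) (F : (k : ℕ) → (Fin (k + 2) → X) → ℝ) : ℝ :=
  ∑' k : ℕ, ∑ w : Fin k → X,
    if ∀ i, w i ≠ xs then
      (∏ i : Fin (k + 1),
          P ((Fin.snoc (Fin.cons x w) xs : Fin (k+2) → X) i.castSucc) ((Fin.snoc (Fin.cons x w) xs : Fin (k+2) → X) i.succ)) *
        F k (Fin.snoc (Fin.cons x w) xs : Fin (k+2) → X)
    else 0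

private lemma auxMono {X : Type*} [Fintype X] (A : Matrix X X ℝ)
    (hA : ∀ x y, 0 ≤ A x y) {v w : X → ℝ} (hvw : ∀ x, v x ≤ w x) (x : X) :
    (A *ᵥ v) x ≤ (A *ᵥ w) x := by
  simp only [Matrix.mulVec, dotProduct]
  exact Finset.sum_le_sum fun y _ => mul_le_mul_of_nonneg_left (hvw y) (hA x y)

private lemma auxPow {X : Type*} [Fintype X] [DecidableEq X] (A B : Matrix X X ℝ)
    (hB : ∀ x y, 0 ≤ B x y) (hBA : ∀ x y, B x y ≤ A x y) (m : ℕ) :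
    (∀ x y, 0 ≤ (B ^ m) x y) ∧ (∀ x y, (B ^ m) x y ≤ (A ^ m) x y) := by
  induction m with
  | zero =>
    refine ⟨fun x y => ?_, fun x y => le_of_eq ?_⟩ <;> simp [Matrix.one_apply]
    split <;> norm_num
  | succ n ih =>
    simp only [pow_succ, Matrix.mul_apply]
    constructor
    · intro x y
      exact Finset.sum_nonneg fun z _ => mul_nonneg (ih.1 x z) (hB z y)
    · intro x y
      refine Finset.sum_le_sum fun z _ => mul_le_mul (ih.2 x z) (hBA z y) (hB z y)
        (le_trans (ih.1 x z) (ih.2 x z))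

private lemma auxPath {X : Type*} [Fintype X] [DecidableEq X] (N : Matrix X X ℝ) (q : X → ℝ) :
    ∀ (k : ℕ) (x : X),
      ∑ w : Fin k → X,
        (∏ i : Fin k, N ((Fin.cons x w : Fin (k+1) → X) i.castSucc) ((Fin.cons x w : Fin (k+1) → X) i.succ)) *
          q ((Fin.cons x w : Fin (k+1) → X) (Fin.last k)) = (N ^ k *ᵥ q) x := by
  intro k
  induction k with
  | zero =>
    intro x
    simp [Matrix.mulVec, dotProduct, Matrix.one_apply]
  | succ n ih =>
    intro x
    rw [pow_succ', ← Matrix.mulVec_mulVec]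
    rw [← (Fin.consEquiv fun _ : Fin (n+1) => X).sum_comp]
    rw [Fintype.sum_prod_type]
    have key : ∀ (y : X) (w' : Fin n → X),
        (∏ i : Fin (n+1), N ((Fin.cons x (Fin.cons y w' : Fin (n+1) → X) : Fin (n+2) → X) i.castSucc)
            ((Fin.cons x (Fin.cons y w' : Fin (n+1) → X) : Fin (n+2) → X) i.succ)) *
          q ((Fin.cons x (Fin.cons y w' : Fin (n+1) → X) : Fin (n+2) → X) (Fin.last (n+1))) =
        N x y * ((∏ i : Fin n, N ((Fin.cons y w' : Fin (n+1) → X) i.castSucc) ((Fin.cons y w' : Fin (n+1) → X) i.succ)) *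
          q ((Fin.cons y w' : Fin (n+1) → X) (Fin.last n))) := by
      intro y w'
      rw [Fin.prod_univ_succ, ← Fin.succ_last, Fin.cons_succ]
      simp only [Fin.castSucc_zero, Fin.cons_zero, Fin.cons_succ, ← Fin.succ_castSucc]
      ring
    calc ∑ y : X, ∑ w' : Fin n → X, _ = ∑ y : X, N x y * ((N ^ n *ᵥ q) y) := by
          refine Finset.sum_congr rfl fun y _ => ?_
          rw [← ih y, Finset.mul_sum]
          exact Finset.sum_congr rfl fun w' _ => key y w'
      _ = _ := rfl

private lemma auxInner {X : Type*} [Fintype X] [DecidableEq X] (P : Matrix X X ℝ)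
    (C : X → ℝ) (α lam : ℝ) (hlam : 0 < lam) (xs : X) (k : ℕ) (x : X) :
    (∑ w : Fin k → X,
      if ∀ i, w i ≠ xs then
        (∏ i : Fin (k + 1),
            P ((Fin.snoc (Fin.cons x w) xs : Fin (k+2) → X) i.castSucc)
              ((Fin.snoc (Fin.cons x w) xs : Fin (k+2) → X) i.succ)) *
          Real.exp (∑ i : Fin (k + 1),
            (α * C ((Fin.snoc (Fin.cons x w) xs : Fin (k+2) → X) i.castSucc) - Real.log lam))
      else 0)
    = ((Matrix.of fun a b => if b = xs then (0:ℝ) else Real.exp (α * C a) * P a b) ^ k *ᵥ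
        (fun y => Real.exp (α * C y) * P y xs)) x * lam⁻¹ ^ (k + 1) := by
  set N : Matrix X X ℝ := Matrix.of fun a b => if b = xs then (0:ℝ) else Real.exp (α * C a) * P a b with hNdef
  set q : X → ℝ := fun y => Real.exp (α * C y) * P y xs with hqdef
  rw [← auxPath N q k x, Finset.sum_mul]
  refine Finset.sum_congr rfl fun w _ => ?_
  set p : Fin (k+2) → X := (Fin.snoc (Fin.cons x w) xs : Fin (k+2) → X) with hpdef
  have hexp : Real.exp (∑ i : Fin (k + 1), (α * C (p i.castSucc) - Real.log lam))
      = (∏ i : Fin (k+1), Real.exp (α * C (p i.castSucc))) * lam⁻¹ ^ (k+1) := by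
    rw [Real.exp_sum]
    have : ∀ i : Fin (k+1), Real.exp (α * C (p i.castSucc) - Real.log lam)
        = Real.exp (α * C (p i.castSucc)) * lam⁻¹ := by
      intro i
      rw [Real.exp_sub, Real.exp_log hlam, div_eq_mul_inv]
    rw [Finset.prod_congr rfl fun i _ => this i, Finset.prod_mul_distrib,
      Finset.prod_const, Finset.card_univ, Fintype.card_fin]
  have hp1 : ∀ i : Fin k, p i.succ.castSucc = w i := by
    intro i
    rw [hpdef, Fin.snoc_castSucc, Fin.cons_succ]
  have hp2 : ∀ i : Fin k, p i.castSucc.castSucc = (Fin.cons x w : Fin (k+1) → X) i.castSucc := by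
    intro i; rw [hpdef, Fin.snoc_castSucc]
  have hp3 : p (Fin.last k).castSucc = (Fin.cons x w : Fin (k+1) → X) (Fin.last k) := by
    rw [hpdef, Fin.snoc_castSucc]
  have hp4 : p (Fin.last k).succ = xs := by
    rw [hpdef, Fin.succ_last, Fin.snoc_last]
  by_cases hall : ∀ i, w i ≠ xs
  · rw [if_pos hall, hexp, ← mul_assoc, mul_comm
      (∏ i : Fin (k+1), P (p i.castSucc) (p i.succ)), ← Finset.prod_mul_distrib]
    congr 1
    rw [Fin.prod_univ_castSucc]
    have hmain : ∀ i : Fin k,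
        Real.exp (α * C (p i.castSucc.castSucc)) * P (p i.castSucc.castSucc) (p i.castSucc.succ)
        = N ((Fin.cons x w : Fin (k+1) → X) i.castSucc) ((Fin.cons x w : Fin (k+1) → X) i.succ) := by
      intro i
      rw [Fin.succ_castSucc, hp1, hp2, Fin.cons_succ]
      exact (if_neg (hall i)).symm
    rw [Finset.prod_congr rfl fun i _ => hmain i]
    congr 1
    rw [hp3, hp4]
  · rw [if_neg hall]
    push_neg at hall
    obtain ⟨i0, hi0⟩ := hall
    have : N ((Fin.cons x w : Fin (k+1) → X) i0.castSucc) ((Fin.cons x w : Fin (k+1) → X) i0.succ) = 0 := by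
      rw [Fin.cons_succ, hi0]
      exact if_pos rfl
    rw [Finset.prod_eq_zero (Finset.mem_univ i0) this, zero_mul, zero_mul]

theorem statement3 {X : Type*} [Fintype X] [DecidableEq X] [Nonempty X]
    (P : Matrix X X ℝ) (hP : StochasticMat P) (hprim : PrimitiveMat P)
    (C : X → ℝ) (α : ℝ) (hα : 0 < α) (xs : X)
    (lam : ℝ) (h : X → ℝ) (hpos : ∀ x, 0 < h x)
    (heig : (Matrix.of fun x y => Real.exp (α * C x) * P x y) *ᵥ h = lam • h)
    (hnorm : h xs = 1) :
    ∀ x : X,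
      h x = retE P xs x
        (fun k p => Real.exp (∑ i : Fin (k + 1), (α * C (p i.castSucc) - Real.log lam))) := by
  set Ph : Matrix X X ℝ := Matrix.of fun x y => Real.exp (α * C x) * P x y with hPhdef
  set N : Matrix X X ℝ := Matrix.of fun a b => if b = xs then (0:ℝ) else Real.exp (α * C a) * P a b with hNdef
  set q : X → ℝ := fun y => Real.exp (α * C y) * P y xs with hqdef
  obtain ⟨m, hm, hPm⟩ := hprim
  -- lam > 0
  have hlam : 0 < lam := by
    have h1 : (Ph *ᵥ h) xs = lam * h xs := by rw [heig]; rfl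
    rw [hnorm, mul_one] at h1
    rw [← h1]
    have h2 : ∃ y, 0 < P xs y := by
      by_contra hc
      push_neg at hc
      have : ∑ y, P xs y = 0 :=
        le_antisymm (Finset.sum_nonpos fun y _ => hc y) (Finset.sum_nonneg fun y _ => hP.1 xs y)
      rw [hP.2 xs] at this; norm_num at this
    obtain ⟨y0, hy0⟩ := h2
    have h3 : (Ph *ᵥ h) xs = ∑ y, Real.exp (α * C xs) * P xs y * h y := rfl
    rw [h3]
    refine Finset.sum_pos'
      (fun y _ => mul_nonneg (mul_nonneg (Real.exp_pos _).le (hP.1 xs y)) (hpos y).le)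
      ⟨y0, Finset.mem_univ y0, mul_pos (mul_pos (Real.exp_pos _) hy0) (hpos y0)⟩
  have hlamne : lam ≠ 0 := hlam.ne'
  -- N basic bounds
  have hN0 : ∀ a b, 0 ≤ N a b := by
    intro a b; rw [hNdef]; simp only [Matrix.of_apply]
    split
    · exact le_refl 0
    · exact mul_nonneg (Real.exp_pos _).le (hP.1 a b)
  have hNPh : ∀ a b, N a b ≤ Ph a b := by
    intro a b; rw [hNdef, hPhdef]; simp only [Matrix.of_apply]
    split
    · exact mul_nonneg (Real.exp_pos _).le (hP.1 a b)
    · exact le_refl _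
  have hq0 : ∀ y, 0 ≤ q y := fun y => mul_nonneg (Real.exp_pos _).le (hP.1 y xs)
  have hNpow := fun k => auxPow Ph N hN0 hNPh k
  -- eigen powers
  have heigk : ∀ k : ℕ, Ph ^ k *ᵥ h = lam ^ k • h := by
    intro k
    induction k with
    | zero => simp [Matrix.one_mulVec]
    | succ n ih =>
      rw [pow_succ, ← Matrix.mulVec_mulVec, heig, Matrix.mulVec_smul, ih, smul_smul, pow_succ, mul_comm]
  -- q = lam • h - N *ᵥ h pointwise
  have hqh : ∀ y, (N *ᵥ h) y = lam * h y - q y := by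
    intro y
    have h1 : lam * h y = ∑ b, Ph y b * h b := by
      have := congrFun heig y
      simp only [Pi.smul_apply, smul_eq_mul] at this
      rw [← this]; rfl
    have h2 : (N *ᵥ h) y = ∑ b, N y b * h b := rfl
    have h3 : ∀ b, Ph y b * h b - N y b * h b = if b = xs then q y else 0 := by
      intro b
      by_cases hb : b = xs
      · subst hb
        rw [hNdef, hPhdef]
        simp [hnorm]
        rfl
      · rw [hNdef, hPhdef]; simp only [Matrix.of_apply, if_neg hb]
        ring
    rw [h2, eq_sub_iff_add_eq, h1]
    have h4 : ∑ b, (Ph y b * h b - N y b * h b) = q y := by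
      rw [Finset.sum_congr rfl fun b _ => h3 b, Finset.sum_ite_eq' Finset.univ xs fun _ => q y]
      simp
    have := Finset.sum_sub_distrib (f := fun b => Ph y b * h b) (g := fun b => N y b * h b) (s := Finset.univ)
    rw [this] at h4
    linarith
  -- u n y
  set u : ℕ → X → ℝ := fun n y => (N ^ n *ᵥ h) y with hudef
  have hu0 : ∀ n y, 0 ≤ u n y := by
    intro n y
    exact Finset.sum_nonneg fun z _ => mul_nonneg ((hNpow n).1 y z) (hpos z).le
  have hstep1 : ∀ y, (N *ᵥ h) y ≤ lam * h y := fun y => by rw [hqh y]; linarith [hq0 y]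
  have hpows : ∀ s, ∀ y, u s y ≤ lam ^ s * h y := by
    intro s
    induction s with
    | zero => intro y; simp [hudef, Matrix.one_mulVec]
    | succ s ih =>
      intro y
      calc u (s+1) y = (N ^ s *ᵥ (N *ᵥ h)) y := by
            show (N ^ (s+1) *ᵥ h) y = _
            rw [pow_succ, ← Matrix.mulVec_mulVec]
        _ ≤ (N ^ s *ᵥ (lam • h)) y := auxMono _ ((hNpow s).1) (fun z => hstep1 z) y
        _ = lam * ((N ^ s *ᵥ h) y) := by rw [Matrix.mulVec_smul]; rfl
        _ ≤ lam * (lam ^ s * h y) := mul_le_mul_of_nonneg_left (ih y) hlam.le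
        _ = lam ^ (s+1) * h y := by ring
  -- column xs of N^m vanishes
  have hNm_xs : ∀ y, (N ^ m) y xs = 0 := by
    obtain ⟨m', rfl⟩ : ∃ m', m = m' + 1 := ⟨m - 1, (Nat.succ_pred_eq_of_pos hm).symm⟩
    intro y
    rw [pow_succ, Matrix.mul_apply]
    refine Finset.sum_eq_zero fun z _ => ?_
    have hz : N z xs = 0 := by rw [hNdef]; simp
    rw [hz, mul_zero]
  -- key inequality
  have hkey : ∀ y, u m y + (Ph ^ m) y xs ≤ lam ^ m * h y := by
    intro y
    have h1 : lam ^ m * h y = ∑ b, (Ph ^ m) y b * h b := by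
      have := congrFun (heigk m) y
      simp only [Pi.smul_apply, smul_eq_mul] at this
      rw [← this]; rfl
    have h2 : u m y + (Ph ^ m) y xs
        = ∑ b, ((N ^ m) y b * h b + if b = xs then (Ph ^ m) y xs else 0) := by
      rw [Finset.sum_add_distrib, Finset.sum_ite_eq' Finset.univ xs fun _ => (Ph ^ m) y xs]
      simp [hudef]
      rfl
    rw [h1, h2]
    refine Finset.sum_le_sum fun b _ => ?_
    by_cases hb : b = xs
    · subst hb; rw [if_pos rfl, hNm_xs y, zero_mul, zero_add, hnorm, mul_one]
    · rw [if_neg hb, add_zero]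
      exact mul_le_mul_of_nonneg_right ((hNpow m).2 y b) (hpos b).le
  -- positivity of (Ph^m) y xs
  have hPhm_pos : ∀ y, 0 < (Ph ^ m) y xs := by
    obtain ⟨x0, -, hx0⟩ := Finset.exists_min_image Finset.univ (fun x => Real.exp (α * C x))
      Finset.univ_nonempty
    set c := Real.exp (α * C x0) with hcdef
    have hc : 0 < c := Real.exp_pos _
    have h1 : ∀ a b, 0 ≤ (c • P) a b := fun a b => mul_nonneg hc.le (hP.1 a b)
    have h2 : ∀ a b, (c • P) a b ≤ Ph a b := by
      intro a b
      have hab : (c • P) a b = c * P a b := rfl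
      rw [hab, hPhdef]; simp only [Matrix.of_apply]
      exact mul_le_mul_of_nonneg_right (hx0 a (Finset.mem_univ a)) (hP.1 a b)
    intro y
    have h3 := (auxPow Ph (c • P) h1 h2 m).2 y xs
    have h4 : ((c • P) ^ m) y xs = c ^ m * (P ^ m) y xs := by rw [smul_pow]; rfl
    calc (0:ℝ) < c ^ m * (P ^ m) y xs := mul_pos (pow_pos hc m) (hPm y xs)
      _ = ((c • P) ^ m) y xs := h4.symm
      _ ≤ (Ph ^ m) y xs := h3
  -- contraction ratio
  obtain ⟨z0, -, hz0⟩ := Finset.exists_max_image Finset.univ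
    (fun y => u m y / (lam ^ m * h y)) Finset.univ_nonempty
  set r := u m z0 / (lam ^ m * h z0) with hrdef
  have hdenpos : ∀ y, 0 < lam ^ m * h y := fun y => mul_pos (pow_pos hlam m) (hpos y)
  have hr0 : 0 ≤ r := div_nonneg (hu0 m z0) (hdenpos z0).le
  have hr1 : r < 1 := by
    rw [hrdef, div_lt_one (hdenpos z0)]
    have := hkey z0
    have := hPhm_pos z0
    linarith
  have hrb : ∀ y, u m y ≤ r * (lam ^ m * h y) := by
    intro y
    have hy := hz0 y (Finset.mem_univ y)
    calc u m y = u m y / (lam ^ m * h y) * (lam ^ m * h y) :=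
          (div_mul_cancel₀ (u m y) (hdenpos y).ne').symm
      _ ≤ r * (lam ^ m * h y) := mul_le_mul_of_nonneg_right hy (hdenpos y).le
  have hpowm : ∀ j, ∀ y, u (m * j) y ≤ (r * lam ^ m) ^ j * h y := by
    intro j
    induction j with
    | zero => intro y; simp [hudef, Matrix.one_mulVec]
    | succ j ih =>
      intro y
      have hmm : m * (j + 1) = m * j + m := Nat.mul_succ m j
      calc u (m * (j+1)) y = (N ^ (m*j) *ᵥ (N ^ m *ᵥ h)) y := by
            show (N ^ (m * (j+1)) *ᵥ h) y = _
            rw [hmm, pow_add, ← Matrix.mulVec_mulVec]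
        _ ≤ (N ^ (m*j) *ᵥ ((r * lam ^ m) • h)) y := by
            refine auxMono _ ((hNpow _).1) (fun z => ?_) y
            have := hrb z
            calc (N ^ m *ᵥ h) z = u m z := rfl
              _ ≤ r * (lam ^ m * h z) := hrb z
              _ = ((r * lam ^ m) • h) z := by simp [mul_assoc]
        _ = (r * lam ^ m) * u (m*j) y := by rw [Matrix.mulVec_smul]; rfl
        _ ≤ (r * lam ^ m) * ((r * lam ^ m) ^ j * h y) :=
            mul_le_mul_of_nonneg_left (ih y) (mul_nonneg hr0 (pow_pos hlam m).le)
        _ = (r * lam ^ m) ^ (j+1) * h y := by ring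
  have hbound : ∀ n x, u n x * lam⁻¹ ^ n ≤ r ^ (n / m) * h x := by
    intro n x
    have hdecomp : m * (n / m) + n % m = n := Nat.div_add_mod n m
    have h5 : u n x ≤ lam ^ (n % m) * ((r * lam ^ m) ^ (n / m) * h x) := by
      calc u n x = (N ^ (m * (n/m)) *ᵥ (N ^ (n % m) *ᵥ h)) x := by
            show (N ^ n *ᵥ h) x = _
            rw [Matrix.mulVec_mulVec, ← pow_add, hdecomp]
        _ ≤ (N ^ (m * (n/m)) *ᵥ (lam ^ (n % m) • h)) x :=
            auxMono _ ((hNpow _).1) (fun z => hpows (n % m) z) x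
        _ = lam ^ (n % m) * u (m * (n/m)) x := by rw [Matrix.mulVec_smul]; rfl
        _ ≤ lam ^ (n % m) * ((r * lam ^ m) ^ (n/m) * h x) :=
            mul_le_mul_of_nonneg_left (hpowm (n/m) x) (pow_nonneg hlam.le _)
    have h6 : u n x * lam⁻¹ ^ n ≤ (lam ^ (n % m) * ((r * lam ^ m) ^ (n / m) * h x)) * lam⁻¹ ^ n :=
      mul_le_mul_of_nonneg_right h5 (pow_nonneg (inv_nonneg.2 hlam.le) n)
    have h7 : (lam ^ (n % m) * ((r * lam ^ m) ^ (n / m) * h x)) * lam⁻¹ ^ n = r ^ (n/m) * h x := by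
      have hpn : lam ^ (n % m) * lam ^ (m * (n/m)) = lam ^ n := by
        rw [← pow_add]; congr 1; omega
      rw [mul_pow, ← pow_mul]
      calc lam ^ (n % m) * ((r ^ (n/m) * lam ^ (m * (n/m))) * h x) * lam⁻¹ ^ n
          = r ^ (n/m) * h x * ((lam ^ (n % m) * lam ^ (m * (n/m))) * lam⁻¹ ^ n) := by ring
        _ = r ^ (n/m) * h x := by
            rw [hpn, inv_pow, mul_inv_cancel₀ (pow_ne_zero n hlamne), mul_one]
    linarith
  -- telescoping identity
  have hab : ∀ k x, (N ^ k *ᵥ q) x * lam⁻¹ ^ (k+1)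
      = u k x * lam⁻¹ ^ k - u (k+1) x * lam⁻¹ ^ (k+1) := by
    intro k x
    have hq' : q = lam • h - N *ᵥ h := by
      funext y
      have := hqh y
      simp only [Pi.sub_apply, Pi.smul_apply, smul_eq_mul]
      linarith
    have h1 : (N ^ k *ᵥ q) x = lam * u k x - u (k+1) x := by
      rw [hq', Matrix.mulVec_sub, Matrix.mulVec_smul, Matrix.mulVec_mulVec, ← pow_succ]
      rfl
    rw [h1]
    have h2 : lam⁻¹ ^ (k+1) = lam⁻¹ ^ k * lam⁻¹ := pow_succ lam⁻¹ k
    rw [h2]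
    have h3 : lam * lam⁻¹ = 1 := mul_inv_cancel₀ hlamne
    calc (lam * u k x - u (k+1) x) * (lam⁻¹ ^ k * lam⁻¹)
        = u k x * lam⁻¹ ^ k * (lam * lam⁻¹) - u (k+1) x * (lam⁻¹ ^ k * lam⁻¹) := by ring
      _ = u k x * lam⁻¹ ^ k - u (k+1) x * (lam⁻¹ ^ k * lam⁻¹) := by rw [h3, mul_one]
  intro x
  -- partial sums
  have hsum : ∀ n, ∑ k ∈ Finset.range n, (N ^ k *ᵥ q) x * lam⁻¹ ^ (k+1)
      = h x - u n x * lam⁻¹ ^ n := by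
    intro n
    have ht := Finset.sum_range_sub' (f := fun k => u k x * lam⁻¹ ^ k) n
    rw [Finset.sum_congr rfl fun k _ => hab k x, ht]
    simp [hudef, Matrix.one_mulVec]
  -- limit
  have htend0 : Tendsto (fun n => u n x * lam⁻¹ ^ n) atTop (𝓝 0) := by
    apply squeeze_zero (fun n => mul_nonneg (hu0 n x) (pow_nonneg (inv_nonneg.2 hlam.le) n))
      (fun n => hbound n x)
    have hdiv : Tendsto (fun n : ℕ => n / m) atTop atTop := by
      refine tendsto_atTop_atTop.2 fun bnd => ⟨bnd * m, fun n hn => ?_⟩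
      exact (Nat.le_div_iff_mul_le hm).2 hn
    have h8 := ((tendsto_pow_atTop_nhds_zero_of_lt_one hr0 hr1).comp hdiv).mul_const (h x)
    simpa using h8
  have hsumtend : Tendsto (fun n => ∑ k ∈ Finset.range n, (N ^ k *ᵥ q) x * lam⁻¹ ^ (k+1))
      atTop (𝓝 (h x)) := by
    simp only [hsum]
    simpa using tendsto_const_nhds.sub htend0
  have hHasSum : HasSum (fun k => (N ^ k *ᵥ q) x * lam⁻¹ ^ (k+1)) (h x) :=
    (hasSum_iff_tendsto_nat_of_nonneg
      (fun k => mul_nonneg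
        (Finset.sum_nonneg fun z _ => mul_nonneg ((hNpow k).1 x z) (hq0 z))
        (pow_nonneg (inv_nonneg.2 hlam.le) _)) _).2 hsumtend
  calc h x = ∑' k : ℕ, (N ^ k *ᵥ q) x * lam⁻¹ ^ (k+1) := hHasSum.tsum_eq.symm
    _ = retE P xs x
        (fun k p => Real.exp (∑ i : Fin (k + 1), (α * C (p i.castSucc) - Real.log lam))) := by
      rw [retE]
      exact tsum_congr fun k => (auxInner P C α lam hlam xs k x).symm
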